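/- If ‖⟨ξ⟩^{s₂} ∫_ℝ (1-e^{iξ(ξ-2ξ₁-ξ²)})/(ξ-2ξ₁-ξ²) · f(ξ₁)g(ξ-ξ₁)/(⟨ξ₁⟩^{s₁}⟨ξ-ξ₁⟩^{s₁}) dξ₁‖_{L²} ≲ ‖f‖_{L²}‖g‖_{L²} holds for all f,g, then s₂ ≤ 4s₁. Specifically, with f = χ_{[-N,-N+N^{-1}]}, a = 1/2 + √(2N+1/4), g = χ_{[a+N-N^{-1}, a+N+N^{-1}]}, the left side tested on ξ ∈ [a-cN^{-1}, a+cN^{-1}] (small fixed c) is of size N^{1/2 + s₂/2 - 2s₁ - 1} · N^{-1/2}, while ‖f‖_{L²}‖g‖_{L²} ∼ N^{-1}, forcing s₂/2 - 2s₁ ≤ 0. -/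

import Mathlib

open MeasureTheory Complex Set
open scoped ENNReal

noncomputable section

def jap (x : ℝ) : ℝ := Real.sqrt (1 + x ^ 2)

/-- Fourier-side second iterate `∫₀¹ K(1-t')∂ₓ(|S(t')u₀|²) dt'` estimate kernel:
`⟨ξ⟩^{s₂} |∫ (1-e^{iξ(ξ-2ξ₁-ξ²)})/(ξ-2ξ₁-ξ²) · f(ξ₁)g(ξ-ξ₁)/(⟨ξ₁⟩^{s₁}⟨ξ-ξ₁⟩^{s₁}) dξ₁|`. -/
def sToKdV (s₁ s₂ : ℝ) (f g : ℝ → ℂ) (ξ : ℝ) : ℝ :=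
  jap ξ ^ s₂ * ‖∫ ξ₁ : ℝ,
    ((1 - Complex.exp (Complex.I * ((ξ * (ξ - 2 * ξ₁ - ξ ^ 2) : ℝ) : ℂ))) /
        ((ξ - 2 * ξ₁ - ξ ^ 2 : ℝ) : ℂ)) *
      f ξ₁ * g (ξ - ξ₁) / ((jap ξ₁ ^ s₁ * jap (ξ - ξ₁) ^ s₁ : ℝ) : ℂ)‖

namespace StoKdVAux

lemma jap_pos (x : ℝ) : 0 < jap x := Real.sqrt_pos.2 (by positivity)

lemma abs_le_jap (x : ℝ) : |x| ≤ jap x := by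
  rw [jap, ← Real.sqrt_sq_eq_abs]
  exact Real.sqrt_le_sqrt (by nlinarith)

lemma le_jap (x : ℝ) : x ≤ jap x := (le_abs_self x).trans (abs_le_jap x)

lemma neg_le_jap (x : ℝ) : -x ≤ jap x := (neg_le_abs x).trans (abs_le_jap x)

lemma jap_le (x : ℝ) : jap x ≤ |x| + 1 := by
  rw [jap]
  have h : 1 + x ^ 2 ≤ (|x| + 1) ^ 2 := by nlinarith [abs_nonneg x, _root_.sq_abs x]
  calc Real.sqrt (1 + x ^ 2) ≤ Real.sqrt ((|x| + 1) ^ 2) := Real.sqrt_le_sqrt h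
    _ = |x| + 1 := Real.sqrt_sq (by positivity)

/-- rpow bounds for `x` comparable to `M`. -/
lemma rpow_sandwich {M c x : ℝ} (s : ℝ) (hM : 0 < M) (hc : 1 ≤ c)
    (h1 : M / c ≤ x) (h2 : x ≤ M * c) :
    M ^ s / c ^ |s| ≤ x ^ s ∧ x ^ s ≤ M ^ s * c ^ |s| := by
  have hc0 : 0 < c := lt_of_lt_of_le one_pos hc
  have hx : 0 < x := lt_of_lt_of_le (by positivity) h1
  rcases le_or_gt 0 s with hs | hs
  · rw [_root_.abs_of_nonneg hs]
    constructor
    · calc M ^ s / c ^ s = (M / c) ^ s := (Real.div_rpow hM.le hc0.le s).symm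
        _ ≤ x ^ s := Real.rpow_le_rpow (by positivity) h1 hs
    · calc x ^ s ≤ (M * c) ^ s := Real.rpow_le_rpow hx.le h2 hs
        _ = M ^ s * c ^ s := Real.mul_rpow hM.le hc0.le
  · rw [abs_of_neg hs]
    have e1 : (M * c) ^ s = M ^ s / c ^ (-s) := by
      rw [Real.mul_rpow hM.le hc0.le, Real.rpow_neg hc0.le, div_eq_mul_inv, inv_inv]
    have e2 : (M / c) ^ s = M ^ s * c ^ (-s) := by
      rw [Real.div_rpow hM.le hc0.le, Real.rpow_neg hc0.le, div_eq_mul_inv]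
    constructor
    · rw [← e1]
      exact Real.rpow_le_rpow_of_nonpos (by positivity) h2 hs.le
    · rw [← e2]
      exact Real.rpow_le_rpow_of_nonpos (by positivity) h1 hs.le

lemma im_kernel (p θ D : ℝ) :
    (((1 - Complex.exp (Complex.I * (p : ℂ))) / ((θ : ℝ) : ℂ)) / ((D : ℝ) : ℂ)).im
      = (-Real.sin p / θ) / D := by
  rw [mul_comm Complex.I, Complex.exp_mul_I]
  simp [Complex.div_ofReal_im, Complex.sub_im, Complex.sin_ofReal_re]

end StoKdVAux

namespace StoKdVAux

lemma sin_lb {u : ℝ} (h0 : 0 < u) (h1 : u ≤ 1) : 3 / 4 * u ≤ Real.sin u := by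
  nlinarith [Real.sin_gt_sub_cube h0,
    mul_nonneg (mul_nonneg h0.le (by linarith : (0:ℝ) ≤ 1 - u))
      (by linarith : (0:ℝ) ≤ 1 + u)]

lemma kernel_im_le {ξ θ Dv D₀ b : ℝ} (hθ : θ < 0) (hb : 0 < b) (hbξ : b ≤ ξ)
    (ht1 : ξ * -θ ≤ 1) (hDp : 0 < Dv) (hDl : Dv ≤ D₀) (hD₀ : 0 < D₀) :
    -Real.sin (ξ * θ) / θ / Dv ≤ -(3 / 4 * b / D₀) := by
  have hξ0 : 0 < ξ := lt_of_lt_of_le hb hbξ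
  have ht0 : 0 < ξ * -θ := mul_pos hξ0 (by linarith)
  have hsin := sin_lb ht0 ht1
  have hstep : -Real.sin (ξ * θ) / θ ≤ -(3 / 4 * ξ) := by
    rw [div_le_iff_of_neg hθ]
    have h1 : Real.sin (ξ * θ) = -Real.sin (ξ * -θ) := by
      rw [← Real.sin_neg]; ring_nf
    rw [h1]
    nlinarith
  have hstep2 : -Real.sin (ξ * θ) / θ / Dv ≤ -(3 / 4 * ξ) / Dv :=
    (div_le_div_iff_of_pos_right hDp).mpr hstep
  refine hstep2.trans ?_
  rw [neg_div, neg_le_neg_iff, div_le_div_iff₀ hD₀ hDp]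
  nlinarith [mul_le_mul hbξ hDl hDp.le (by linarith : (0:ℝ) ≤ ξ)]


set_option maxHeartbeats 2000000 in
lemma key (s₁ s₂ C : ℝ) (hC : 0 < C)
    (h : ∀ f g : ℝ → ℂ,
      eLpNorm (fun ξ : ℝ => sToKdV s₁ s₂ f g ξ) 2 volume ≤
        ENNReal.ofReal C * eLpNorm f 2 volume * eLpNorm g 2 volume)
    (N : ℝ) (hN : 10000 ≤ N) :
    N ^ ((s₂ - 4 * s₁) / 2) ≤ 80 / 3 * C * 5 ^ |s₂| * 6 ^ |s₁| := by
  have hN0 : (0:ℝ) < N := by linarith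
  set M := Real.sqrt N with hMdef
  have hM : (100:ℝ) ≤ M := by
    have h1 : Real.sqrt 10000 ≤ M := Real.sqrt_le_sqrt hN
    have h100 : Real.sqrt 10000 = 100 := by
      rw [show (10000:ℝ) = 100 ^ 2 by norm_num, Real.sqrt_sq (by norm_num)]
    linarith
  have hM0 : (0:ℝ) < M := by linarith
  have hMN : M ^ 2 = N := Real.sq_sqrt hN0.le
  set a := 1 / 2 + Real.sqrt (2 * N + 1 / 4) with hadef
  have ha2 : a ^ 2 = a + 2 * N := by
    have h1 := Real.sq_sqrt (show (0:ℝ) ≤ 2 * N + 1 / 4 by linarith)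
    rw [hadef]; nlinarith [h1]
  have haL : M ≤ a := by
    have h1 : Real.sqrt N ≤ Real.sqrt (2 * N + 1 / 4) := Real.sqrt_le_sqrt (by linarith)
    rw [hadef]; rw [hMdef]; linarith
  have haU : a ≤ 3 * M := by
    have h1 : Real.sqrt (2 * N + 1 / 4) ≤ Real.sqrt (4 * N) := Real.sqrt_le_sqrt (by linarith)
    have h2 : Real.sqrt (4 * N) = 2 * M := by
      rw [show (4:ℝ) * N = 2 ^ 2 * N by ring, Real.sqrt_mul (by positivity),
        Real.sqrt_sq (by norm_num)]
    rw [hadef]; nlinarith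
  set ε := 1 / N with hεdef
  have hε0 : (0:ℝ) < ε := by positivity
  have hεN : ε * N = 1 := by rw [hεdef]; field_simp
  have hεM : ε * M * M = 1 := by nlinarith
  have hε1 : ε ≤ 1 / 10000 := by
    rw [hεdef, div_le_div_iff₀ hN0 (by norm_num)]; linarith
  clear_value M a ε
  clear hMdef hadef
  -- data
  set S1 : Set ℝ := Icc (-N) (-N + ε) with hS1def
  set S2 : Set ℝ := Icc (a + N - ε) (a + N + ε) with hS2def
  set E : Set ℝ := Icc (a + ε / 200) (a + ε / 100) with hEdef
  set f : ℝ → ℂ := S1.indicator (fun _ => (1:ℂ)) with hfdef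
  set g : ℝ → ℂ := S2.indicator (fun _ => (1:ℂ)) with hgdef
  set P := (5:ℝ) ^ |s₂| with hPdef
  set Q := (6:ℝ) ^ |s₁| with hQdef
  set Z := N ^ (2 * s₁) with hZdef
  set Y := M ^ s₂ with hYdef
  have hP0 : 0 < P := Real.rpow_pos_of_pos (by norm_num) _
  have hQ0 : 0 < Q := Real.rpow_pos_of_pos (by norm_num) _
  have hZ0 : 0 < Z := Real.rpow_pos_of_pos hN0 _
  have hY0 : 0 < Y := Real.rpow_pos_of_pos hM0 _
  set m := Y / P * (3 / 4 * M / (Q * Z) * ε) with hmdef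
  have hm0 : 0 < m := by positivity
  clear_value P Q Z Y m
  -- pointwise lower bound on E
  have hpoint : ∀ ξ ∈ E, m ≤ sToKdV s₁ s₂ f g ξ := by
    intro ξ hξ
    rw [hEdef] at hξ
    obtain ⟨hξ1, hξ2⟩ := hξ
    have hξL : M ≤ ξ := by linarith
    have hξU : ξ ≤ 4 * M := by linarith
    have hξ0 : 0 < ξ := by linarith
    set G : ℝ → ℂ := fun x =>
      (1 - Complex.exp (Complex.I * ((ξ * (ξ - 2 * x - ξ ^ 2) : ℝ) : ℂ))) /
        ((ξ - 2 * x - ξ ^ 2 : ℝ) : ℂ) / ((jap x ^ s₁ * jap (ξ - x) ^ s₁ : ℝ) : ℂ) with hGdef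
    -- facts for points of S1
    have hθneg : ∀ x ∈ S1, ξ - 2 * x - ξ ^ 2 < 0 := by
      intro x hx
      rw [hS1def] at hx
      obtain ⟨hx1, hx2⟩ := hx
      have hA : 0 < ξ - a := by linarith
      have hB : 0 < ξ + a - 1 := by linarith
      nlinarith [mul_pos hA hB]
    have hθabs : ∀ x ∈ S1, -(ξ - 2 * x - ξ ^ 2) ≤ 1 / 10 * ε * M := by
      intro x hx
      rw [hS1def] at hx
      obtain ⟨hx1, hx2⟩ := hx
      have hA : ξ - a ≤ ε / 100 := by linarith
      have hA0 : 0 ≤ ξ - a := by linarith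
      have hB : ξ + a - 1 ≤ 7 * M := by linarith
      have hB0 : 0 ≤ ξ + a - 1 := by linarith
      have hAB : (ξ - a) * (ξ + a - 1) ≤ ε / 100 * (7 * M) :=
        mul_le_mul hA hB hB0 (by positivity)
      nlinarith [hAB]
    have hDpos : ∀ x : ℝ, 0 < jap x ^ s₁ * jap (ξ - x) ^ s₁ :=
      fun x => mul_pos (Real.rpow_pos_of_pos (jap_pos x) _)
        (Real.rpow_pos_of_pos (jap_pos _) _)
    have hDle : ∀ x ∈ S1, jap x ^ s₁ * jap (ξ - x) ^ s₁ ≤ Q * Z := by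
      intro x hx
      rw [hS1def] at hx
      obtain ⟨hx1, hx2⟩ := hx
      have hj1 : jap x ^ s₁ ≤ N ^ s₁ * 2 ^ |s₁| := by
        refine (rpow_sandwich s₁ hN0 (by norm_num) ?_ ?_).2
        · have := neg_le_jap x; nlinarith
        · have h1 := jap_le x
          have h2 : |x| = -x := abs_of_nonpos (by nlinarith)
          nlinarith
      have hj2 : jap (ξ - x) ^ s₁ ≤ N ^ s₁ * 3 ^ |s₁| := by
        refine (rpow_sandwich s₁ hN0 (by norm_num) ?_ ?_).2
        · have := le_jap (ξ - x); nlinarith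
        · have h1 := jap_le (ξ - x)
          have h2 : |ξ - x| = ξ - x := abs_of_nonneg (by nlinarith)
          nlinarith
      calc jap x ^ s₁ * jap (ξ - x) ^ s₁ ≤ (N ^ s₁ * 2 ^ |s₁|) * (N ^ s₁ * 3 ^ |s₁|) := by
            apply mul_le_mul hj1 hj2 (Real.rpow_nonneg (jap_pos _).le _) (by positivity)
        _ = Q * Z := by
            rw [hQdef, hZdef, two_mul, Real.rpow_add hN0,
              show (6:ℝ) = 2 * 3 by norm_num, Real.mul_rpow (by norm_num) (by norm_num)]
            ring
    -- imaginary part bound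
    have hIm : ∀ x ∈ S1, (G x).im ≤ -(3 / 4 * M / (Q * Z)) := by
      intro x hx
      have hθ := hθneg x hx
      have hθa := hθabs x hx
      have hDp := hDpos x
      have hDl := hDle x hx
      have him0 : (G x).im
          = -Real.sin (ξ * (ξ - 2 * x - ξ ^ 2)) / (ξ - 2 * x - ξ ^ 2)
              / (jap x ^ s₁ * jap (ξ - x) ^ s₁) :=
        im_kernel _ _ _
      rw [him0]
      refine kernel_im_le hθ hM0 hξL ?_ hDp hDl (mul_pos hQ0 hZ0)
      have h1 : ξ * -(ξ - 2 * x - ξ ^ 2) ≤ 4 * M * (1 / 10 * ε * M) :=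
        mul_le_mul hξU hθa (by linarith) (by linarith)
      nlinarith
    -- continuity and integrability of G on S1
    have hGc : ContinuousOn G S1 := by
      have hjapc : Continuous jap := by
        unfold jap; exact Real.continuous_sqrt.comp (by continuity)
      have hnum : Continuous fun x : ℝ =>
          1 - Complex.exp (Complex.I * ((ξ * (ξ - 2 * x - ξ ^ 2) : ℝ) : ℂ)) := by
        continuity
      have hden1 : Continuous fun x : ℝ => ((ξ - 2 * x - ξ ^ 2 : ℝ) : ℂ) := by continuity
      have hD1 : ContinuousOn (fun x : ℝ => jap x ^ s₁) S1 := by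
        apply ContinuousOn.rpow_const hjapc.continuousOn
        intro x _; exact Or.inl (jap_pos x).ne'
      have hD2 : ContinuousOn (fun x : ℝ => jap (ξ - x) ^ s₁) S1 := by
        apply ContinuousOn.rpow_const (hjapc.comp (by continuity)).continuousOn
        intro x _; exact Or.inl (jap_pos _).ne'
      have hden2 : ContinuousOn
          (fun x : ℝ => ((jap x ^ s₁ * jap (ξ - x) ^ s₁ : ℝ) : ℂ)) S1 :=
        Complex.continuous_ofReal.comp_continuousOn (hD1.mul hD2)
      refine ContinuousOn.div (ContinuousOn.div hnum.continuousOn hden1.continuousOn ?_)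
        hden2 ?_
      · intro x hx
        simp only [ne_eq, Complex.ofReal_eq_zero]
        exact (hθneg x hx).ne
      · intro x hx
        simp only [ne_eq, Complex.ofReal_eq_zero]
        exact (hDpos x).ne'
    have hGint : IntegrableOn G S1 volume := by
      rw [hS1def] at hGc ⊢
      exact hGc.integrableOn_compact isCompact_Icc
    -- rewrite the integrand as an indicator
    have hEq : (fun ξ₁ : ℝ =>
        ((1 - Complex.exp (Complex.I * ((ξ * (ξ - 2 * ξ₁ - ξ ^ 2) : ℝ) : ℂ))) /
            ((ξ - 2 * ξ₁ - ξ ^ 2 : ℝ) : ℂ)) *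
          f ξ₁ * g (ξ - ξ₁) / ((jap ξ₁ ^ s₁ * jap (ξ - ξ₁) ^ s₁ : ℝ) : ℂ))
        = S1.indicator G := by
      funext x
      by_cases hx : x ∈ S1
      · rw [indicator_of_mem hx]
        have hf1 : f x = 1 := by rw [hfdef]; exact indicator_of_mem hx _
        have hg1 : g (ξ - x) = 1 := by
          rw [hgdef]
          refine indicator_of_mem ?_ _
          rw [hS2def]
          rw [hS1def] at hx
          obtain ⟨hx1, hx2⟩ := hx
          constructor <;> nlinarith
        rw [hf1, hg1, mul_one, mul_one, hGdef]
      · rw [indicator_of_notMem hx]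
        have hf0 : f x = 0 := by rw [hfdef]; exact indicator_of_notMem hx _
        rw [hf0, mul_zero, zero_mul, zero_div]
    -- norm of the integral from below
    have hvolS1 : (volume S1).toReal = ε := by
      rw [hS1def, Real.volume_Icc, ENNReal.toReal_ofReal (by linarith)]
      ring
    have hμS1 : volume S1 ≠ ⊤ := by
      rw [hS1def, Real.volume_Icc]; exact ENNReal.ofReal_ne_top
    have hS1meas : MeasurableSet S1 := by rw [hS1def]; exact measurableSet_Icc
    have hImInt : (∫ x in S1, G x).im ≤ -(3 / 4 * M / (Q * Z)) * ε := by
      have h1 : (∫ x in S1, G x).im = ∫ x in S1, (G x).im := by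
        have h0 := ContinuousLinearMap.integral_comp_comm Complex.imCLM hGint
        simp only [Complex.imCLM_apply] at h0
        exact h0.symm
      rw [h1]
      have h2 : ∫ x in S1, (G x).im ≤ ∫ _ in S1, -(3 / 4 * M / (Q * Z)) :=
        setIntegral_mono_on hGint.im (integrableOn_const hμS1 enorm_ne_top)
          hS1meas hIm
      rw [setIntegral_const, smul_eq_mul, measureReal_def, hvolS1] at h2
      linarith
    have hnorm : 3 / 4 * M / (Q * Z) * ε ≤ ‖∫ x in S1, G x‖ := by
      have h1 : |(∫ x in S1, G x).im| ≤ ‖∫ x in S1, G x‖ :=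
        Complex.abs_im_le_norm _
      have h2 : 3 / 4 * M / (Q * Z) * ε ≤ |(∫ x in S1, G x).im| := by
        calc 3 / 4 * M / (Q * Z) * ε ≤ -(∫ x in S1, G x).im := by linarith
          _ ≤ |(∫ x in S1, G x).im| := neg_le_abs _
      linarith
    -- jap ξ ^ s₂ from below
    have hjapξ : Y / P ≤ jap ξ ^ s₂ := by
      rw [hYdef, hPdef]
      refine (rpow_sandwich s₂ hM0 (by norm_num) ?_ ?_).1
      · have := le_jap ξ; nlinarith
      · have h1 := jap_le ξ
        have h2 : |ξ| = ξ := abs_of_nonneg hξ0.le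
        nlinarith
    -- conclude
    have hsto : sToKdV s₁ s₂ f g ξ = jap ξ ^ s₂ * ‖∫ x in S1, G x‖ := by
      unfold sToKdV
      rw [hEq, integral_indicator hS1meas]
    rw [hsto, hmdef]
    apply mul_le_mul hjapξ hnorm (by positivity)
      (le_trans (by positivity) hjapξ)
  -- nonnegativity of sToKdV
  have hSnonneg : ∀ x : ℝ, 0 ≤ sToKdV s₁ s₂ f g x := by
    intro x
    unfold sToKdV
    exact mul_nonneg (Real.rpow_nonneg (jap_pos x).le _) (norm_nonneg _)
  have hEmeas : MeasurableSet E := by rw [hEdef]; exact measurableSet_Icc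
  have hS1meas : MeasurableSet S1 := by rw [hS1def]; exact measurableSet_Icc
  have hS2meas : MeasurableSet S2 := by rw [hS2def]; exact measurableSet_Icc
  have htR : (1 / (2:ℝ≥0∞).toReal) = (1/2:ℝ) := by norm_num
  -- eLpNorm of f and g
  have hf2 : eLpNorm f 2 volume = (ENNReal.ofReal ε) ^ (1/2:ℝ) := by
    rw [hfdef, eLpNorm_indicator_const hS1meas (by norm_num) (by norm_num), htR]
    have hv : volume S1 = ENNReal.ofReal ε := by
      rw [hS1def, Real.volume_Icc]; congr 1; ring
    rw [hv]
    simp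
  have hg2 : eLpNorm g 2 volume = (ENNReal.ofReal (2*ε)) ^ (1/2:ℝ) := by
    rw [hgdef, eLpNorm_indicator_const hS2meas (by norm_num) (by norm_num), htR]
    have hv : volume S2 = ENNReal.ofReal (2*ε) := by
      rw [hS2def, Real.volume_Icc]; congr 1; ring
    rw [hv]
    simp
  -- lower bound of LHS eLpNorm
  have hmono : eLpNorm (E.indicator (fun _ => m)) 2 volume ≤
      eLpNorm (fun ξ : ℝ => sToKdV s₁ s₂ f g ξ) 2 volume := by
    apply eLpNorm_mono
    intro x
    rw [Real.norm_eq_abs, Real.norm_eq_abs, _root_.abs_of_nonneg (hSnonneg x)]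
    by_cases hx : x ∈ E
    · rw [indicator_of_mem hx, _root_.abs_of_nonneg hm0.le]; exact hpoint x hx
    · rw [indicator_of_notMem hx, abs_zero]; exact hSnonneg x
  have hindE : eLpNorm (E.indicator (fun _ => m)) 2 volume =
      ENNReal.ofReal m * (ENNReal.ofReal (ε/200)) ^ (1/2:ℝ) := by
    rw [eLpNorm_indicator_const hEmeas (by norm_num) (by norm_num), htR]
    have hv : volume E = ENNReal.ofReal (ε/200) := by
      rw [hEdef, Real.volume_Icc]; congr 1; ring
    rw [hv]
    congr 1
    rw [← ofReal_norm_eq_enorm, Real.norm_eq_abs, _root_.abs_of_nonneg hm0.le]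
  -- the combined ENNReal inequality
  have hchain : ENNReal.ofReal m * (ENNReal.ofReal (ε/200)) ^ (1/2:ℝ) ≤
      ENNReal.ofReal C * (ENNReal.ofReal ε) ^ (1/2:ℝ) * (ENNReal.ofReal (2*ε)) ^ (1/2:ℝ) := by
    rw [← hindE, ← hf2, ← hg2]
    exact hmono.trans (h f g)
  rw [ENNReal.ofReal_rpow_of_pos (by positivity), ENNReal.ofReal_rpow_of_pos hε0,
    ENNReal.ofReal_rpow_of_pos (by positivity), ← ENNReal.ofReal_mul hm0.le,
    ← ENNReal.ofReal_mul hC.le, ← ENNReal.ofReal_mul (by positivity)] at hchain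
  have hreal : m * (ε/200) ^ (1/2:ℝ) ≤ C * ε ^ (1/2:ℝ) * (2*ε) ^ (1/2:ℝ) :=
    (ENNReal.ofReal_le_ofReal_iff (by positivity)).mp hchain
  rw [← Real.sqrt_eq_rpow, ← Real.sqrt_eq_rpow, ← Real.sqrt_eq_rpow] at hreal
  -- explicit square roots
  have hsε : Real.sqrt ε = 1 / M := by
    rw [hεdef, ← hMN, show (1:ℝ)/M^2 = (1/M)^2 by ring, Real.sqrt_sq (by positivity)]
  have hdiv : Real.sqrt (ε/200) = Real.sqrt ε / Real.sqrt 200 := by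
    rw [show ε/200 = ε * (1/200) by ring, Real.sqrt_mul hε0.le,
      show (1:ℝ)/200 = 200⁻¹ by norm_num, Real.sqrt_inv]
    ring
  have hmul2 : Real.sqrt (2*ε) = Real.sqrt 2 * Real.sqrt ε := Real.sqrt_mul (by norm_num) ε
  have h200pos : (0:ℝ) < Real.sqrt 200 := Real.sqrt_pos.2 (by norm_num)
  have h2pos : (0:ℝ) < Real.sqrt 2 := Real.sqrt_pos.2 (by norm_num)
  have h2200 : Real.sqrt 2 * Real.sqrt 200 = 20 := by
    rw [← Real.sqrt_mul (by norm_num), show (2:ℝ)*200 = 20^2 by norm_num,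
      Real.sqrt_sq (by norm_num)]
  rw [hdiv, hmul2, hsε] at hreal
  -- m * M ≤ 20 * C
  have hm20 : m * M ≤ 20 * C := by
    have h3 := mul_le_mul_of_nonneg_right hreal
      (le_of_lt (by positivity : (0:ℝ) < M * (M * Real.sqrt 200)))
    have e : m * (1/M / Real.sqrt 200) * (M*(M*Real.sqrt 200)) = m * M := by
      field_simp
    have e2 : C * (1/M) * (Real.sqrt 2 * (1/M)) * (M*(M*Real.sqrt 200))
        = C * (Real.sqrt 2 * Real.sqrt 200) := by
      field_simp
    rw [e, e2, h2200] at h3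
    linarith
  -- unfold m
  have e3 : m * M = 3/4 * Y * (ε*M*M) / (P*(Q*Z)) := by
    rw [hmdef]; field_simp
  rw [e3, hεM, mul_one] at hm20
  have hYPQZ : Y ≤ 80/3*C*(P*(Q*Z)) := by
    rw [div_le_iff₀ (by positivity)] at hm20
    nlinarith
  -- rewrite the goal
  have hrt : N ^ (1/2:ℝ) = M := by
    rw [← Real.sqrt_eq_rpow, ← hMN, Real.sqrt_sq hM0.le]
  have hNY : N ^ ((s₂ - 4*s₁)/2) = Y / Z := by
    have h5 : (s₂ - 4*s₁)/2 = (1/2)*s₂ - 2*s₁ := by ring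
    rw [h5, Real.rpow_sub hN0, Real.rpow_mul hN0.le, hrt, ← hYdef, ← hZdef]
  rw [hNY, div_le_iff₀ hZ0]
  nlinarith


end StoKdVAux

/-- Necessity: `L² × L² → L²` boundedness of the Schrödinger-to-KdV second iterate
forces `s₂ ≤ 4s₁`. -/
theorem s_to_kdv_necessity (s₁ s₂ : ℝ)
    (h : ∃ C : ℝ, 0 < C ∧ ∀ f g : ℝ → ℂ,
      eLpNorm (fun ξ : ℝ => sToKdV s₁ s₂ f g ξ) 2 volume ≤
        ENNReal.ofReal C * eLpNorm f 2 volume * eLpNorm g 2 volume) :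
    s₂ ≤ 4 * s₁ := by

  obtain ⟨C, hC, hb⟩ := h
  by_contra hcon
  push_neg at hcon
  set e := (s₂ - 4 * s₁) / 2 with hedef
  have he : 0 < e := by rw [hedef]; linarith
  set K := 80 / 3 * C * 5 ^ |s₂| * 6 ^ |s₁| with hKdef
  have hK0 : 0 < K := by
    have h5 : (0:ℝ) < 5 ^ |s₂| := Real.rpow_pos_of_pos (by norm_num) _
    have h6 : (0:ℝ) < 6 ^ |s₁| := Real.rpow_pos_of_pos (by norm_num) _
    positivity
  set N := max 10000 ((K + 1) ^ e⁻¹) with hNdef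
  have hN : (10000:ℝ) ≤ N := le_max_left _ _
  have hkey := StoKdVAux.key s₁ s₂ C hC hb N hN
  rw [← hedef, ← hKdef] at hkey
  have h1 : ((K + 1) ^ (e⁻¹:ℝ)) ^ e ≤ N ^ e :=
    Real.rpow_le_rpow (Real.rpow_nonneg (by linarith) _) (le_max_right _ _) he.le
  have h2 : ((K + 1) ^ (e⁻¹:ℝ)) ^ e = K + 1 := by
    rw [← Real.rpow_mul (by linarith : (0:ℝ) ≤ K + 1), inv_mul_cancel₀ he.ne',
      Real.rpow_one]
  linarith
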